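/- For every 0 < ε < 1/16 and every c ∈ [0, 2], one has (ln τ²_ε)'(c) + (ln τ¹_ε)'(2-c) = 8ε ((ln Φ)'(8εc) - (ln Φ)'(8εc - 16ε)) > 0, where τ¹_ε(c) := 2^{5/2} Φ(-8εc) and τ²_ε(c) := 2^{5/2} Φ(8εc). -/

import Mathlib

/-- The complete elliptic integral of the first kind,
`K(m) = ∫₀¹ dζ / √((1-ζ²)(1-mζ²))`, defined for `m < 1`. -/
noncomputable def ellipticK (m : ℝ) : ℝ :=
  ∫ ζ in (0:ℝ)..1, 1 / Real.sqrt ((1 - ζ ^ 2) * (1 - m * ζ ^ 2))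

/-- `Φ(x) = K((1-√(1-x))/(1+√(1-x))) / √(1+√(1-x))`, defined for `x < 1`. -/
noncomputable def Phi (x : ℝ) : ℝ :=
  ellipticK ((1 - Real.sqrt (1 - x)) / (1 + Real.sqrt (1 - x))) /
    Real.sqrt (1 + Real.sqrt (1 - x))

/-- The period `τ¹_ε(c) = 2^{5/2} Φ(-8εc)`. -/
noncomputable def tau1 (ε c : ℝ) : ℝ := (2:ℝ) ^ ((5:ℝ) / 2) * Phi (-(8 * ε * c))

/-- The period `τ²_ε(c) = 2^{5/2} Φ(8εc)`. -/
noncomputable def tau2 (ε c : ℝ) : ℝ := (2:ℝ) ^ ((5:ℝ) / 2) * Phi (8 * ε * c)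

open MeasureTheory Set intervalIntegral
open scoped Interval

noncomputable def uu (x ζ : ℝ) : ℝ :=
  (1 - ζ ^ 2) * ((1 - ζ ^ 2) + Real.sqrt (1 - x) * (1 + ζ ^ 2))

noncomputable def K0 (x ζ : ℝ) : ℝ := uu x ζ ^ (-(1/2) : ℝ)

noncomputable def K1 (x ζ : ℝ) : ℝ :=
  (1 - ζ ^ 2) * (1 + ζ ^ 2) / (4 * Real.sqrt (1 - x)) * uu x ζ ^ (-(3/2) : ℝ)

noncomputable def K2 (x ζ : ℝ) : ℝ :=
  (1 - ζ ^ 2) * (1 + ζ ^ 2) / (8 * Real.sqrt (1 - x) ^ 3) * uu x ζ ^ (-(3/2) : ℝ)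
  + 3 * ((1 - ζ ^ 2) * (1 + ζ ^ 2)) ^ 2 / (16 * Real.sqrt (1 - x) ^ 2) * uu x ζ ^ (-(5/2) : ℝ)

noncomputable def s1f (x ζ : ℝ) : ℝ := uu x ζ ^ (-(1/4) : ℝ)

noncomputable def s2f (x ζ : ℝ) : ℝ :=
  (1 - ζ ^ 2) * (1 + ζ ^ 2) / (4 * Real.sqrt (1 - x)) * uu x ζ ^ (-(5/4) : ℝ)

noncomputable def DD (x ζ : ℝ) : ℝ :=
  (1 - ζ ^ 2) * (1 + ζ ^ 2) / (8 * Real.sqrt (1 - x) ^ 3) * uu x ζ ^ (-(3/2) : ℝ)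
  + ((1 - ζ ^ 2) * (1 + ζ ^ 2)) ^ 2 / (8 * Real.sqrt (1 - x) ^ 2) * uu x ζ ^ (-(5/2) : ℝ)

noncomputable def PP (x : ℝ) : ℝ := ∫ ζ in (0:ℝ)..1, K0 x ζ
noncomputable def PP1 (x : ℝ) : ℝ := ∫ ζ in (0:ℝ)..1, K1 x ζ
noncomputable def PP2 (x : ℝ) : ℝ := ∫ ζ in (0:ℝ)..1, K2 x ζ

lemma sq1x_pos {x : ℝ} (hx : x < 1) : 0 < Real.sqrt (1 - x) :=
  Real.sqrt_pos.mpr (by linarith)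

lemma uu_nonneg {x ζ : ℝ} (hζ : ζ ∈ Icc (0:ℝ) 1) : 0 ≤ uu x ζ := by
  have h1 : 0 ≤ 1 - ζ ^ 2 := by nlinarith [hζ.1, hζ.2]
  have h2 : 0 ≤ Real.sqrt (1 - x) := Real.sqrt_nonneg _
  have h3 : 0 ≤ 1 + ζ ^ 2 := by positivity
  unfold uu; positivity

lemma uu_lower {x ζ : ℝ} (hζ : ζ ∈ Icc (0:ℝ) 1) :
    (1 - ζ ^ 2) * Real.sqrt (1 - x) ≤ uu x ζ := by
  have h1 : 0 ≤ 1 - ζ ^ 2 := by nlinarith [hζ.1, hζ.2]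
  have h2 : 0 ≤ Real.sqrt (1 - x) := Real.sqrt_nonneg _
  unfold uu
  nlinarith [mul_nonneg h1 h1, mul_nonneg (mul_nonneg h1 h2) (sq_nonneg ζ)]

lemma uu_pos {x ζ : ℝ} (hx : x < 1) (hζ : ζ ∈ Ico (0:ℝ) 1) : 0 < uu x ζ := by
  have h1 : 0 < 1 - ζ ^ 2 := by nlinarith [hζ.1, hζ.2]
  have h2 : 0 < Real.sqrt (1 - x) := sq1x_pos hx
  have h3 : 0 < 1 + ζ ^ 2 := by positivity
  unfold uu; positivity

lemma rpow_bound_aux {A hm u : ℝ} (hA : 0 < A) (hm0 : 0 < hm) (hu : A * hm ≤ u)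
    {q : ℝ} (hq : q ≤ 0) : u ^ q ≤ A ^ q * hm ^ q := by
  have h := Real.rpow_le_rpow_of_nonpos (by positivity) hu hq
  rwa [Real.mul_rpow hA.le hm0.le] at h

lemma A_half {ζ : ℝ} (hζ : ζ ∈ Ioo (0:ℝ) 1) :
    (1 - ζ ^ 2) ^ (-(1/2) : ℝ) ≤ (1 - ζ) ^ (-(1/2) : ℝ) :=
  Real.rpow_le_rpow_of_nonpos (by nlinarith [hζ.1, hζ.2]) (by nlinarith [hζ.1, hζ.2])
    (by norm_num)

lemma A_merge1 {A : ℝ} (hA : 0 < A) : A * A ^ (-(3/2) : ℝ) = A ^ (-(1/2) : ℝ) := by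
  nth_rewrite 1 [← Real.rpow_one A]
  rw [← Real.rpow_add hA]; norm_num

lemma A_merge2 {A : ℝ} (hA : 0 < A) : A ^ 2 * A ^ (-(5/2) : ℝ) = A ^ (-(1/2) : ℝ) := by
  rw [show (A ^ 2 : ℝ) = A ^ ((2:ℕ) : ℝ) by rw [Real.rpow_natCast], ← Real.rpow_add hA]
  norm_num

lemma rpow_sq {u : ℝ} (hu : 0 ≤ u) (p : ℝ) : (u ^ p) ^ 2 = u ^ (2 * p) := by
  rw [← Real.rpow_natCast (u ^ p) 2, ← Real.rpow_mul hu]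
  norm_num [mul_comm]

section Bounds

variable {x ζ hm : ℝ}

lemma base_facts (hm0 : 0 < hm) (hh : hm ≤ Real.sqrt (1 - x)) (hζ : ζ ∈ Ioo (0:ℝ) 1) :
    0 < 1 - ζ ^ 2 ∧ (1 - ζ ^ 2) * hm ≤ uu x ζ := by
  have hA : 0 < 1 - ζ ^ 2 := by nlinarith [hζ.1, hζ.2]
  refine ⟨hA, ?_⟩
  calc (1 - ζ ^ 2) * hm ≤ (1 - ζ ^ 2) * Real.sqrt (1 - x) := by nlinarith
    _ ≤ uu x ζ := uu_lower ⟨hζ.1.le, hζ.2.le⟩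

lemma K0_bound (hm0 : 0 < hm) (hh : hm ≤ Real.sqrt (1 - x)) (hζ : ζ ∈ Ioo (0:ℝ) 1) :
    |K0 x ζ| ≤ hm ^ (-(1/2) : ℝ) * (1 - ζ) ^ (-(1/2) : ℝ) := by
  obtain ⟨hA, hu⟩ := base_facts hm0 hh hζ
  have h0 : 0 ≤ uu x ζ := le_trans (by positivity) hu
  rw [abs_of_nonneg (by unfold K0; positivity)]
  calc K0 x ζ ≤ (1 - ζ ^ 2) ^ (-(1/2) : ℝ) * hm ^ (-(1/2) : ℝ) :=
        rpow_bound_aux hA hm0 hu (by norm_num)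
    _ ≤ (1 - ζ) ^ (-(1/2) : ℝ) * hm ^ (-(1/2) : ℝ) := by
        have := A_half hζ
        have : (0:ℝ) ≤ hm ^ (-(1/2) : ℝ) := by positivity
        nlinarith [A_half hζ]
    _ = hm ^ (-(1/2) : ℝ) * (1 - ζ) ^ (-(1/2) : ℝ) := by ring

lemma K1_bound (hm0 : 0 < hm) (hh : hm ≤ Real.sqrt (1 - x)) (hζ : ζ ∈ Ioo (0:ℝ) 1) :
    |K1 x ζ| ≤ (2 / (4 * hm) * hm ^ (-(3/2) : ℝ)) * (1 - ζ) ^ (-(1/2) : ℝ) := by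
  obtain ⟨hA, hu⟩ := base_facts hm0 hh hζ
  have hs : 0 < Real.sqrt (1 - x) := lt_of_lt_of_le hm0 hh
  have h0 : 0 ≤ uu x ζ := le_trans (by positivity) hu
  rw [abs_of_nonneg (by unfold K1; positivity)]
  have hB : (1:ℝ) + ζ ^ 2 ≤ 2 := by nlinarith [hζ.2, hζ.1]
  have step1 : K1 x ζ ≤ ((1 - ζ ^ 2) * 2 / (4 * hm)) *
      ((1 - ζ ^ 2) ^ (-(3/2) : ℝ) * hm ^ (-(3/2) : ℝ)) := by
    unfold K1
    apply mul_le_mul ?_ (rpow_bound_aux hA hm0 hu (by norm_num)) (by positivity) (by positivity)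
    gcongr
  calc K1 x ζ ≤ ((1 - ζ ^ 2) * 2 / (4 * hm)) *
      ((1 - ζ ^ 2) ^ (-(3/2) : ℝ) * hm ^ (-(3/2) : ℝ)) := step1
    _ = (2 / (4 * hm) * hm ^ (-(3/2) : ℝ)) * ((1 - ζ ^ 2) * (1 - ζ ^ 2) ^ (-(3/2) : ℝ)) := by
        ring
    _ = (2 / (4 * hm) * hm ^ (-(3/2) : ℝ)) * (1 - ζ ^ 2) ^ (-(1/2) : ℝ) := by
        rw [A_merge1 hA]
    _ ≤ (2 / (4 * hm) * hm ^ (-(3/2) : ℝ)) * (1 - ζ) ^ (-(1/2) : ℝ) := by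
        have h1 : (0:ℝ) ≤ 2 / (4 * hm) * hm ^ (-(3/2) : ℝ) := by positivity
        nlinarith [A_half hζ]

end Bounds

section Bounds2

variable {x ζ hm : ℝ}

lemma term1_bound (hm0 : 0 < hm) (hh : hm ≤ Real.sqrt (1 - x)) (hζ : ζ ∈ Ioo (0:ℝ) 1)
    {d : ℝ} (hd : 0 < d) (j : ℕ) :
    (1 - ζ ^ 2) * (1 + ζ ^ 2) / (d * Real.sqrt (1 - x) ^ j) * uu x ζ ^ (-(3/2) : ℝ) ≤
      (2 / (d * hm ^ j) * hm ^ (-(3/2) : ℝ)) * (1 - ζ) ^ (-(1/2) : ℝ) := by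
  obtain ⟨hA, hu⟩ := base_facts hm0 hh hζ
  have hs : 0 < Real.sqrt (1 - x) := lt_of_lt_of_le hm0 hh
  have h0 : 0 ≤ uu x ζ := le_trans (by positivity) hu
  have hB : (1:ℝ) + ζ ^ 2 ≤ 2 := by nlinarith [hζ.2, hζ.1]
  calc (1 - ζ ^ 2) * (1 + ζ ^ 2) / (d * Real.sqrt (1 - x) ^ j) * uu x ζ ^ (-(3/2) : ℝ)
      ≤ ((1 - ζ ^ 2) * 2 / (d * hm ^ j)) *
        ((1 - ζ ^ 2) ^ (-(3/2) : ℝ) * hm ^ (-(3/2) : ℝ)) := by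
        apply mul_le_mul ?_ (rpow_bound_aux hA hm0 hu (by norm_num))
          (Real.rpow_nonneg h0 _) (by positivity)
        gcongr
    _ = (2 / (d * hm ^ j) * hm ^ (-(3/2) : ℝ)) * ((1 - ζ ^ 2) * (1 - ζ ^ 2) ^ (-(3/2) : ℝ)) := by
        ring
    _ = (2 / (d * hm ^ j) * hm ^ (-(3/2) : ℝ)) * (1 - ζ ^ 2) ^ (-(1/2) : ℝ) := by
        rw [A_merge1 hA]
    _ ≤ (2 / (d * hm ^ j) * hm ^ (-(3/2) : ℝ)) * (1 - ζ) ^ (-(1/2) : ℝ) := by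
        have h1 : (0:ℝ) ≤ 2 / (d * hm ^ j) * hm ^ (-(3/2) : ℝ) := by positivity
        nlinarith [A_half hζ]

lemma term2_bound (hm0 : 0 < hm) (hh : hm ≤ Real.sqrt (1 - x)) (hζ : ζ ∈ Ioo (0:ℝ) 1)
    {d : ℝ} (hd : 0 < d) {c3 : ℝ} (hc3 : 0 ≤ c3) :
    c3 * ((1 - ζ ^ 2) * (1 + ζ ^ 2)) ^ 2 / (d * Real.sqrt (1 - x) ^ 2) *
        uu x ζ ^ (-(5/2) : ℝ) ≤
      (c3 * 4 / (d * hm ^ 2) * hm ^ (-(5/2) : ℝ)) * (1 - ζ) ^ (-(1/2) : ℝ) := by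
  obtain ⟨hA, hu⟩ := base_facts hm0 hh hζ
  have hs : 0 < Real.sqrt (1 - x) := lt_of_lt_of_le hm0 hh
  have h0 : 0 ≤ uu x ζ := le_trans (by positivity) hu
  have hB : (1:ℝ) + ζ ^ 2 ≤ 2 := by nlinarith [hζ.2, hζ.1]
  calc c3 * ((1 - ζ ^ 2) * (1 + ζ ^ 2)) ^ 2 / (d * Real.sqrt (1 - x) ^ 2) *
        uu x ζ ^ (-(5/2) : ℝ)
      ≤ (c3 * ((1 - ζ ^ 2) ^ 2 * 4) / (d * hm ^ 2)) *
        ((1 - ζ ^ 2) ^ (-(5/2) : ℝ) * hm ^ (-(5/2) : ℝ)) := by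
        apply mul_le_mul ?_ (rpow_bound_aux hA hm0 hu (by norm_num))
          (Real.rpow_nonneg h0 _) (by positivity)
        rw [mul_pow]
        gcongr
        nlinarith
    _ = (c3 * 4 / (d * hm ^ 2) * hm ^ (-(5/2) : ℝ)) *
        ((1 - ζ ^ 2) ^ 2 * (1 - ζ ^ 2) ^ (-(5/2) : ℝ)) := by ring
    _ = (c3 * 4 / (d * hm ^ 2) * hm ^ (-(5/2) : ℝ)) * (1 - ζ ^ 2) ^ (-(1/2) : ℝ) := by
        rw [A_merge2 hA]
    _ ≤ (c3 * 4 / (d * hm ^ 2) * hm ^ (-(5/2) : ℝ)) * (1 - ζ) ^ (-(1/2) : ℝ) := by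
        have h1 : (0:ℝ) ≤ c3 * 4 / (d * hm ^ 2) * hm ^ (-(5/2) : ℝ) := by positivity
        nlinarith [A_half hζ]

lemma K2_bound (hm0 : 0 < hm) (hh : hm ≤ Real.sqrt (1 - x)) (hζ : ζ ∈ Ioo (0:ℝ) 1) :
    |K2 x ζ| ≤ (2 / (8 * hm ^ 3) * hm ^ (-(3/2) : ℝ) +
      3 * 4 / (16 * hm ^ 2) * hm ^ (-(5/2) : ℝ)) * (1 - ζ) ^ (-(1/2) : ℝ) := by
  obtain ⟨hA, hu⟩ := base_facts hm0 hh hζ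
  have h0 : 0 ≤ uu x ζ := le_trans (by positivity) hu
  have hs : 0 < Real.sqrt (1 - x) := lt_of_lt_of_le hm0 hh
  rw [abs_of_nonneg (by unfold K2; positivity)]
  unfold K2
  have h1 := term1_bound hm0 hh hζ (by norm_num : (0:ℝ) < 8) 3
  have h2 := term2_bound hm0 hh hζ (by norm_num : (0:ℝ) < 16) (by norm_num : (0:ℝ) ≤ 3)
  calc _ ≤ (2 / (8 * hm ^ 3) * hm ^ (-(3/2) : ℝ)) * (1 - ζ) ^ (-(1/2) : ℝ) +
        (3 * 4 / (16 * hm ^ 2) * hm ^ (-(5/2) : ℝ)) * (1 - ζ) ^ (-(1/2) : ℝ) :=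
        add_le_add h1 h2
    _ = _ := by ring

lemma DD_bound (hm0 : 0 < hm) (hh : hm ≤ Real.sqrt (1 - x)) (hζ : ζ ∈ Ioo (0:ℝ) 1) :
    |DD x ζ| ≤ (2 / (8 * hm ^ 3) * hm ^ (-(3/2) : ℝ) +
      4 / (8 * hm ^ 2) * hm ^ (-(5/2) : ℝ)) * (1 - ζ) ^ (-(1/2) : ℝ) := by
  obtain ⟨hA, hu⟩ := base_facts hm0 hh hζ
  have h0 : 0 ≤ uu x ζ := le_trans (by positivity) hu
  have hs : 0 < Real.sqrt (1 - x) := lt_of_lt_of_le hm0 hh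
  rw [abs_of_nonneg (by unfold DD; positivity)]
  unfold DD
  have h1 := term1_bound hm0 hh hζ (by norm_num : (0:ℝ) < 8) 3
  have h2 := term2_bound hm0 hh hζ (by norm_num : (0:ℝ) < 8) (by norm_num : (0:ℝ) ≤ 1)
  rw [one_mul] at h2
  calc _ ≤ (2 / (8 * hm ^ 3) * hm ^ (-(3/2) : ℝ)) * (1 - ζ) ^ (-(1/2) : ℝ) +
        (1 * 4 / (8 * hm ^ 2) * hm ^ (-(5/2) : ℝ)) * (1 - ζ) ^ (-(1/2) : ℝ) := by
        refine add_le_add h1 ?_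
        rw [one_mul]
        simpa only [one_mul] using h2
    _ = _ := by ring

lemma s2f_sq_eq (h0 : 0 ≤ uu x ζ) :
    s2f x ζ ^ 2 = ((1 - ζ ^ 2) * (1 + ζ ^ 2)) ^ 2 / (16 * Real.sqrt (1 - x) ^ 2) *
      uu x ζ ^ (-(5/2) : ℝ) := by
  unfold s2f
  rw [mul_pow, rpow_sq h0, div_pow, show (2 * (-(5/4)) : ℝ) = -(5/2) by norm_num]
  ring

lemma s2f_sq_bound (hm0 : 0 < hm) (hh : hm ≤ Real.sqrt (1 - x)) (hζ : ζ ∈ Ioo (0:ℝ) 1) :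
    |s2f x ζ ^ 2| ≤ (4 / (16 * hm ^ 2) * hm ^ (-(5/2) : ℝ)) * (1 - ζ) ^ (-(1/2) : ℝ) := by
  obtain ⟨hA, hu⟩ := base_facts hm0 hh hζ
  have h0 : 0 ≤ uu x ζ := le_trans (by positivity) hu
  rw [abs_of_nonneg (sq_nonneg _), s2f_sq_eq h0]
  have h2 := term2_bound hm0 hh hζ (by norm_num : (0:ℝ) < 16) (by norm_num : (0:ℝ) ≤ 1)
  rw [one_mul] at h2
  convert h2 using 3 <;> ring

end Bounds2

lemma bb_int (c : ℝ) :
    IntervalIntegrable (fun ζ : ℝ => c * (1 - ζ) ^ (-(1/2) : ℝ)) volume 0 1 := by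
  have h : IntervalIntegrable (fun ζ : ℝ => (1 - ζ) ^ (-(1/2) : ℝ)) volume 0 1 := by
    have := (intervalIntegrable_rpow' (a := 1) (b := 0) (r := -(1/2))
      (by norm_num)).comp_sub_left 1
    simpa using this
  simpa using h.const_mul c

lemma ae_ne_one : ∀ᵐ ζ : ℝ, ζ ≠ 1 := by
  refine ae_iff.mpr ?_
  simp only [not_not, setOf_eq_eq_singleton]
  exact Real.volume_singleton

lemma aesm_aux (f : ℝ → ℝ) (hf : ContinuousOn f (Ioo (0:ℝ) 1)) :
    AEStronglyMeasurable f (volume.restrict (Ι (0:ℝ) 1)) := by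
  rw [uIoc_of_le (by norm_num : (0:ℝ) ≤ 1),
    ← Measure.restrict_congr_set Ioo_ae_eq_Ioc]
  exact hf.aestronglyMeasurable measurableSet_Ioo

lemma continuous_uu (x : ℝ) : Continuous (fun ζ => uu x ζ) := by
  unfold uu; continuity

lemma contOn_term {x : ℝ} (hx : x < 1) (p : ℝ) (c : ℝ → ℝ) (hc : Continuous c) :
    ContinuousOn (fun ζ => c ζ * uu x ζ ^ p) (Ioo (0:ℝ) 1) := by
  apply hc.continuousOn.mul
  exact (continuous_uu x).continuousOn.rpow_const
    (fun ζ hζ => Or.inl (uu_pos hx ⟨hζ.1.le, hζ.2⟩).ne')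

lemma ii_of_bound {f : ℝ → ℝ} (hmeas : AEStronglyMeasurable f (volume.restrict (Ι (0:ℝ) 1)))
    {c : ℝ} (hb : ∀ ζ ∈ Ioo (0:ℝ) 1, |f ζ| ≤ c * (1 - ζ) ^ (-(1/2) : ℝ)) :
    IntervalIntegrable f volume 0 1 := by
  apply (bb_int c).mono_fun' hmeas
  rw [Filter.EventuallyLE, ae_restrict_iff' measurableSet_uIoc]
  filter_upwards [ae_ne_one] with ζ hζne hζ
  rw [uIoc_of_le (by norm_num : (0:ℝ) ≤ 1)] at hζ
  rw [Real.norm_eq_abs]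
  exact hb ζ ⟨hζ.1, hζ.2.lt_of_ne hζne⟩

section Integrability

variable {x : ℝ}

lemma aesm_K0 (hx : x < 1) : AEStronglyMeasurable (K0 x) (volume.restrict (Ι (0:ℝ) 1)) := by
  apply aesm_aux
  unfold K0
  have := contOn_term hx (-(1/2)) (fun _ => (1:ℝ)) continuous_const
  simpa only [one_mul] using this

lemma aesm_K1 (hx : x < 1) : AEStronglyMeasurable (K1 x) (volume.restrict (Ι (0:ℝ) 1)) :=
  aesm_aux _ (contOn_term hx (-(3/2)) _ (by continuity))

lemma aesm_K2 (hx : x < 1) : AEStronglyMeasurable (K2 x) (volume.restrict (Ι (0:ℝ) 1)) :=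
  aesm_aux _ ((contOn_term hx (-(3/2)) _ (by continuity)).add
    (contOn_term hx (-(5/2)) _ (by continuity)))

lemma aesm_DD (hx : x < 1) : AEStronglyMeasurable (DD x) (volume.restrict (Ι (0:ℝ) 1)) :=
  aesm_aux _ ((contOn_term hx (-(3/2)) _ (by continuity)).add
    (contOn_term hx (-(5/2)) _ (by continuity)))

lemma aesm_s2sq (hx : x < 1) : AEStronglyMeasurable (fun ζ => s2f x ζ ^ 2)
    (volume.restrict (Ι (0:ℝ) 1)) := by
  apply aesm_aux
  apply ContinuousOn.pow
  exact contOn_term hx (-(5/4)) _ (by continuity)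

lemma ii_K0 (hx : x < 1) : IntervalIntegrable (K0 x) volume 0 1 :=
  ii_of_bound (aesm_K0 hx) (fun ζ hζ => K0_bound (sq1x_pos hx) le_rfl hζ)

lemma ii_K1 (hx : x < 1) : IntervalIntegrable (K1 x) volume 0 1 :=
  ii_of_bound (aesm_K1 hx) (fun ζ hζ => K1_bound (sq1x_pos hx) le_rfl hζ)

lemma ii_K2 (hx : x < 1) : IntervalIntegrable (K2 x) volume 0 1 :=
  ii_of_bound (aesm_K2 hx) (fun ζ hζ => K2_bound (sq1x_pos hx) le_rfl hζ)

lemma ii_DD (hx : x < 1) : IntervalIntegrable (DD x) volume 0 1 :=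
  ii_of_bound (aesm_DD hx) (fun ζ hζ => DD_bound (sq1x_pos hx) le_rfl hζ)

lemma ii_s2sq (hx : x < 1) : IntervalIntegrable (fun ζ => s2f x ζ ^ 2) volume 0 1 :=
  ii_of_bound (aesm_s2sq hx) (fun ζ hζ => s2f_sq_bound (sq1x_pos hx) le_rfl hζ)

end Integrability

section PointwiseId

variable {x ζ : ℝ}

lemma s1f_sq_eq (h0 : 0 ≤ uu x ζ) : s1f x ζ ^ 2 = K0 x ζ := by
  unfold s1f K0
  rw [rpow_sq h0]
  norm_num

lemma s1f_mul_s2f (h0 : 0 ≤ uu x ζ) : s1f x ζ * s2f x ζ = K1 x ζ := by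
  unfold s1f s2f K1
  rcases eq_or_lt_of_le h0 with h | h
  · rw [← h, Real.zero_rpow (by norm_num), Real.zero_rpow (by norm_num),
      Real.zero_rpow (by norm_num)]
    ring
  · rw [show (-(3/2) : ℝ) = -(1/4) + -(5/4) by norm_num, Real.rpow_add h]
    ring

lemma K2_split (h0 : 0 ≤ uu x ζ) : K2 x ζ = s2f x ζ ^ 2 + DD x ζ := by
  rw [s2f_sq_eq h0]
  unfold K2 DD
  ring

end PointwiseId

section DerivPointwise

variable {x ζ : ℝ}

lemma hasDerivAt_sqrt1x (hx : x < 1) :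
    HasDerivAt (fun y => Real.sqrt (1 - y)) (-(1 / (2 * Real.sqrt (1 - x)))) x := by
  have h1 : HasDerivAt (fun y : ℝ => 1 - y) (-1) x := (hasDerivAt_id x).const_sub 1
  have h2 := (Real.hasDerivAt_sqrt (by linarith : (1:ℝ) - x ≠ 0)).comp x h1
  refine h2.congr_deriv ?_
  ring

lemma hasDerivAt_uu (ζ : ℝ) (hx : x < 1) :
    HasDerivAt (fun y => uu y ζ)
      (-((1 - ζ ^ 2) * (1 + ζ ^ 2) / (2 * Real.sqrt (1 - x)))) x := by
  have h := (((hasDerivAt_sqrt1x hx).mul_const (1 + ζ ^ 2)).const_add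
    (1 - ζ ^ 2)).const_mul (1 - ζ ^ 2)
  refine h.congr_deriv ?_
  field_simp

lemma hasDerivAt_K0 (hx : x < 1) (hζ : ζ ∈ Ioo (0:ℝ) 1) :
    HasDerivAt (fun y => K0 y ζ) (K1 x ζ) x := by
  have hupos := uu_pos hx ⟨hζ.1.le, hζ.2⟩
  have hs := sq1x_pos hx
  have h := (hasDerivAt_uu ζ hx).rpow_const (p := -(1/2)) (Or.inl hupos.ne')
  have he : (-(1/2) - 1 : ℝ) = -(3/2) := by norm_num
  rw [he] at h
  refine h.congr_deriv ?_
  unfold K1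
  ring

lemma hasDerivAt_K1 (hx : x < 1) (hζ : ζ ∈ Ioo (0:ℝ) 1) :
    HasDerivAt (fun y => K1 y ζ) (K2 x ζ) x := by
  have hupos := uu_pos hx ⟨hζ.1.le, hζ.2⟩
  have hs := sq1x_pos hx
  have heq : (fun y => K1 y ζ) = fun y =>
      (1 - ζ ^ 2) * (1 + ζ ^ 2) / 4 *
        ((Real.sqrt (1 - y))⁻¹ * uu y ζ ^ (-(3/2) : ℝ)) := by
    funext y
    unfold K1
    ring
  rw [heq]
  have hinv := (hasDerivAt_sqrt1x hx).inv hs.ne'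
  have hpow := (hasDerivAt_uu ζ hx).rpow_const (p := -(3/2)) (Or.inl hupos.ne')
  have he : (-(3/2) - 1 : ℝ) = -(5/2) := by norm_num
  rw [he] at hpow
  have h := (hinv.mul hpow).const_mul ((1 - ζ ^ 2) * (1 + ζ ^ 2) / 4)
  refine h.congr_deriv ?_
  unfold K2
  simp only [Pi.inv_apply]
  field_simp
  ring

end DerivPointwise

section Dominated

lemma hasDerivAt_PP {x₀ : ℝ} (hx₀ : x₀ < 1) : HasDerivAt PP (PP1 x₀) x₀ := by
  have hε : 0 < (1 - x₀) / 2 := by linarith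
  set hm := Real.sqrt ((1 - x₀) / 2) with hmdef
  have hm0 : 0 < hm := Real.sqrt_pos.mpr hε
  have hball : ∀ y ∈ Metric.ball x₀ ((1 - x₀) / 2), y < 1 ∧ hm ≤ Real.sqrt (1 - y) := by
    intro y hy
    rw [Metric.mem_ball, Real.dist_eq, abs_lt] at hy
    exact ⟨by linarith [hy.2], Real.sqrt_le_sqrt (by linarith [hy.2])⟩
  have main := intervalIntegral.hasDerivAt_integral_of_dominated_loc_of_deriv_le
    (F := fun y ζ => K0 y ζ) (F' := fun y ζ => K1 y ζ) (x₀ := x₀) (a := 0) (b := 1)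
    (μ := volume)
    (bound := fun ζ => (2 / (4 * hm) * hm ^ (-(3/2) : ℝ)) * (1 - ζ) ^ (-(1/2) : ℝ))
    (Metric.ball_mem_nhds x₀ hε) ((eventually_lt_nhds hx₀).mono fun y hy => aesm_K0 hy) (ii_K0 hx₀)
    (aesm_K1 hx₀) ?_ (bb_int _) ?_
  · exact main.2
  · filter_upwards [ae_ne_one] with ζ hζne hζ y hy
    rw [uIoc_of_le (by norm_num : (0:ℝ) ≤ 1)] at hζ
    obtain ⟨hy1, hyhm⟩ := hball y hy
    rw [Real.norm_eq_abs]
    exact K1_bound hm0 hyhm ⟨hζ.1, hζ.2.lt_of_ne hζne⟩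
  · filter_upwards [ae_ne_one] with ζ hζne hζ y hy
    rw [uIoc_of_le (by norm_num : (0:ℝ) ≤ 1)] at hζ
    obtain ⟨hy1, _⟩ := hball y hy
    exact hasDerivAt_K0 hy1 ⟨hζ.1, hζ.2.lt_of_ne hζne⟩

lemma hasDerivAt_PP1 {x₀ : ℝ} (hx₀ : x₀ < 1) : HasDerivAt PP1 (PP2 x₀) x₀ := by
  have hε : 0 < (1 - x₀) / 2 := by linarith
  set hm := Real.sqrt ((1 - x₀) / 2) with hmdef
  have hm0 : 0 < hm := Real.sqrt_pos.mpr hε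
  have hball : ∀ y ∈ Metric.ball x₀ ((1 - x₀) / 2), y < 1 ∧ hm ≤ Real.sqrt (1 - y) := by
    intro y hy
    rw [Metric.mem_ball, Real.dist_eq, abs_lt] at hy
    exact ⟨by linarith [hy.2], Real.sqrt_le_sqrt (by linarith [hy.2])⟩
  have main := intervalIntegral.hasDerivAt_integral_of_dominated_loc_of_deriv_le
    (F := fun y ζ => K1 y ζ) (F' := fun y ζ => K2 y ζ) (x₀ := x₀) (a := 0) (b := 1)
    (μ := volume)
    (bound := fun ζ => (2 / (8 * hm ^ 3) * hm ^ (-(3/2) : ℝ) +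
      3 * 4 / (16 * hm ^ 2) * hm ^ (-(5/2) : ℝ)) * (1 - ζ) ^ (-(1/2) : ℝ))
    (Metric.ball_mem_nhds x₀ hε) ((eventually_lt_nhds hx₀).mono fun y hy => aesm_K1 hy) (ii_K1 hx₀)
    (aesm_K2 hx₀) ?_ (bb_int _) ?_
  · exact main.2
  · filter_upwards [ae_ne_one] with ζ hζne hζ y hy
    rw [uIoc_of_le (by norm_num : (0:ℝ) ≤ 1)] at hζ
    obtain ⟨hy1, hyhm⟩ := hball y hy
    rw [Real.norm_eq_abs]
    exact K2_bound hm0 hyhm ⟨hζ.1, hζ.2.lt_of_ne hζne⟩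
  · filter_upwards [ae_ne_one] with ζ hζne hζ y hy
    rw [uIoc_of_le (by norm_num : (0:ℝ) ≤ 1)] at hζ
    obtain ⟨hy1, _⟩ := hball y hy
    exact hasDerivAt_K1 hy1 ⟨hζ.1, hζ.2.lt_of_ne hζne⟩

end Dominated

lemma PP_pos {x : ℝ} (hx : x < 1) : 0 < PP x := by
  apply intervalIntegral_pos_of_pos_on (ii_K0 hx) _ zero_lt_one
  intro ζ hζ
  have := uu_pos hx ⟨hζ.1.le, hζ.2⟩
  unfold K0
  positivity

lemma intDD_pos {x : ℝ} (hx : x < 1) : 0 < ∫ ζ in (0:ℝ)..1, DD x ζ := by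
  apply intervalIntegral_pos_of_pos_on (ii_DD hx) _ zero_lt_one
  intro ζ hζ
  have h1 := uu_pos hx ⟨hζ.1.le, hζ.2⟩
  have h2 : 0 < 1 - ζ ^ 2 := by nlinarith [hζ.1, hζ.2]
  have h3 : 0 < Real.sqrt (1 - x) := sq1x_pos hx
  have h4 : 0 < 1 + ζ ^ 2 := by positivity
  unfold DD
  positivity


lemma ii_s1sq {x : ℝ} (hx : x < 1) :
    IntervalIntegrable (fun ζ => s1f x ζ ^ 2) volume 0 1 := by
  apply ii_of_bound (c := Real.sqrt (1 - x) ^ (-(1/2) : ℝ))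
  · apply aesm_aux
    exact (contOn_term hx (-(1/4)) (fun _ => (1:ℝ)) continuous_const).pow 2 |>.congr
      (fun ζ hζ => by simp [s1f])
  · intro ζ hζ
    rw [s1f_sq_eq (uu_nonneg ⟨hζ.1.le, hζ.2.le⟩)]
    exact K0_bound (sq1x_pos hx) le_rfl hζ

lemma ii_s1s2 {x : ℝ} (hx : x < 1) :
    IntervalIntegrable (fun ζ => s1f x ζ * s2f x ζ) volume 0 1 := by
  apply ii_of_bound (c := 2 / (4 * Real.sqrt (1 - x)) * Real.sqrt (1 - x) ^ (-(3/2) : ℝ))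
  · apply aesm_aux
    exact ((contOn_term hx (-(1/4)) (fun _ => (1:ℝ)) continuous_const).mul
      (contOn_term hx (-(5/4)) (fun ζ : ℝ => (1 - ζ ^ 2) * (1 + ζ ^ 2) / (4 * Real.sqrt (1 - x)))
        (by continuity))).congr (fun ζ hζ => by simp only [s1f, s2f, one_mul, Pi.mul_apply])
  · intro ζ hζ
    rw [s1f_mul_s2f (uu_nonneg ⟨hζ.1.le, hζ.2.le⟩)]
    exact K1_bound (sq1x_pos hx) le_rfl hζ

lemma key_ineq {x : ℝ} (hx : x < 1) : PP1 x ^ 2 < PP2 x * PP x := by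
  have huIcc : uIcc (0:ℝ) 1 = Icc 0 1 := uIcc_of_le (by norm_num)
  have h0 : ∀ ζ ∈ uIcc (0:ℝ) 1, 0 ≤ uu x ζ := by
    rw [huIcc]; exact fun ζ hζ => uu_nonneg hζ
  have hP : PP x = ∫ ζ in (0:ℝ)..1, s1f x ζ ^ 2 :=
    intervalIntegral.integral_congr fun ζ hζ => (s1f_sq_eq (h0 ζ hζ)).symm
  have hP1 : PP1 x = ∫ ζ in (0:ℝ)..1, s1f x ζ * s2f x ζ :=
    intervalIntegral.integral_congr fun ζ hζ => (s1f_mul_s2f (h0 ζ hζ)).symm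
  have hP2 : PP2 x = (∫ ζ in (0:ℝ)..1, s2f x ζ ^ 2) + ∫ ζ in (0:ℝ)..1, DD x ζ := by
    rw [show PP2 x = ∫ ζ in (0:ℝ)..1, (s2f x ζ ^ 2 + DD x ζ) from
      intervalIntegral.integral_congr fun ζ hζ => K2_split (h0 ζ hζ)]
    exact intervalIntegral.integral_add (ii_s2sq hx) (ii_DD hx)
  set I1 := ∫ ζ in (0:ℝ)..1, s1f x ζ ^ 2 with hI1
  set I12 := ∫ ζ in (0:ℝ)..1, s1f x ζ * s2f x ζ with hI12
  set I2 := ∫ ζ in (0:ℝ)..1, s2f x ζ ^ 2 with hI2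
  have hI1pos : 0 < I1 := by rw [← hP]; exact PP_pos hx
  -- Cauchy-Schwarz
  have hCS : I12 ^ 2 ≤ I1 * I2 := by
    set t := I12 / I1 with ht
    have hnn : 0 ≤ ∫ ζ in (0:ℝ)..1, (s2f x ζ - t * s1f x ζ) ^ 2 := by
      apply intervalIntegral.integral_nonneg (by norm_num)
      exact fun ζ _ => sq_nonneg _
    have hexp : (∫ ζ in (0:ℝ)..1, (s2f x ζ - t * s1f x ζ) ^ 2) =
        I2 - 2 * t * I12 + t ^ 2 * I1 := by
      have : (fun ζ => (s2f x ζ - t * s1f x ζ) ^ 2) = fun ζ =>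
          s2f x ζ ^ 2 - 2 * t * (s1f x ζ * s2f x ζ) + t ^ 2 * s1f x ζ ^ 2 := by
        funext ζ; ring
      rw [this, intervalIntegral.integral_add (((ii_s2sq hx).sub
        ((ii_s1s2 hx).const_mul (2 * t)))) ((ii_s1sq hx).const_mul (t ^ 2)),
        intervalIntegral.integral_sub (ii_s2sq hx) ((ii_s1s2 hx).const_mul (2 * t)),
        intervalIntegral.integral_const_mul, intervalIntegral.integral_const_mul]
    rw [hexp] at hnn
    have h2 : I2 - 2 * t * I12 + t ^ 2 * I1 = I2 - I12 ^ 2 / I1 := by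
      rw [ht]; field_simp; ring
    rw [h2] at hnn
    have := (div_le_iff₀ hI1pos).mp (by linarith : I12 ^ 2 / I1 ≤ I2)
    linarith [this]
  have hDDpos := intDD_pos hx
  rw [hP1, hP2, hP]
  nlinarith [hCS, hI1pos, hDDpos, mul_pos hDDpos hI1pos]

lemma M_hasDeriv {x : ℝ} (hx : x < 1) : HasDerivAt (fun y => PP1 y / PP y)
    ((PP2 x * PP x - PP1 x * PP1 x) / PP x ^ 2) x :=
  (hasDerivAt_PP1 hx).div (hasDerivAt_PP hx) (PP_pos hx).ne'

lemma M_strictMono : StrictMonoOn (fun y => PP1 y / PP y) (Iio 1) := by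
  apply strictMonoOn_of_deriv_pos (convex_Iio 1)
  · exact fun y hy => ((M_hasDeriv hy).continuousAt).continuousWithinAt
  · intro y hy
    rw [interior_Iio] at hy
    rw [(M_hasDeriv hy).deriv]
    have hk := key_ineq hy
    have hp := PP_pos hy
    apply div_pos (by nlinarith) (by positivity)

lemma Phi_eq {x : ℝ} (hx : x < 1) : Phi x = PP x := by
  have hs : 0 ≤ Real.sqrt (1 - x) := Real.sqrt_nonneg _
  set s := Real.sqrt (1 - x) with hsdef
  have h1s : 0 < 1 + s := by linarith
  unfold Phi ellipticK PP
  rw [← intervalIntegral.integral_div]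
  apply intervalIntegral.integral_congr
  intro ζ hζ
  rw [uIcc_of_le (by norm_num : (0:ℝ) ≤ 1)] at hζ
  have hA : 0 ≤ 1 - ζ ^ 2 := by nlinarith [hζ.1, hζ.2]
  have hkey : (1 + s) * ((1 - ζ ^ 2) * (1 - (1 - s) / (1 + s) * ζ ^ 2)) = uu x ζ := by
    have hm : (1 - s) / (1 + s) * (1 + s) = 1 - s := div_mul_cancel₀ _ h1s.ne'
    unfold uu
    linear_combination (-((1 - ζ ^ 2) * ζ ^ 2)) * hm
  have huu : 0 ≤ uu x ζ := uu_nonneg hζ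
  have hW : 0 ≤ (1 - ζ ^ 2) * (1 - (1 - s) / (1 + s) * ζ ^ 2) := by
    nlinarith [hkey, huu, h1s]
  calc (1 / Real.sqrt ((1 - ζ ^ 2) * (1 - (1 - s) / (1 + s) * ζ ^ 2))) / Real.sqrt (1 + s)
      = 1 / (Real.sqrt ((1 - ζ ^ 2) * (1 - (1 - s) / (1 + s) * ζ ^ 2)) * Real.sqrt (1 + s)) := by
        rw [div_div]
    _ = 1 / Real.sqrt ((1 + s) * ((1 - ζ ^ 2) * (1 - (1 - s) / (1 + s) * ζ ^ 2))) := by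
        rw [Real.sqrt_mul h1s.le, mul_comm]
    _ = 1 / Real.sqrt (uu x ζ) := by rw [hkey]
    _ = K0 x ζ := by
        unfold K0
        rw [Real.sqrt_eq_rpow, one_div, ← Real.rpow_neg huu]

lemma hasDerivAt_Phi {y : ℝ} (hy : y < 1) : HasDerivAt Phi (PP1 y) y :=
  (hasDerivAt_PP hy).congr_of_eventuallyEq
    (Filter.eventuallyEq_of_mem (Iio_mem_nhds hy) (fun z hz => Phi_eq hz))

lemma Phi_pos {y : ℝ} (hy : y < 1) : 0 < Phi y := by rw [Phi_eq hy]; exact PP_pos hy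

lemma hasDerivAt_logPhi {y : ℝ} (hy : y < 1) :
    HasDerivAt (fun z => Real.log (Phi z)) (PP1 y / PP y) y := by
  have hlog := (Real.hasDerivAt_log (Phi_pos hy).ne').comp y (hasDerivAt_Phi hy)
  have hlog' : HasDerivAt (fun z => Real.log (Phi z)) ((Phi y)⁻¹ * PP1 y) y := hlog
  convert hlog' using 1
  rw [Phi_eq hy, div_eq_inv_mul]

lemma deriv_logPhi {y : ℝ} (hy : y < 1) :
    deriv (fun z => Real.log (Phi z)) y = PP1 y / PP y :=
  (hasDerivAt_logPhi hy).deriv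

/-- For `0 < ε < 1/16` and `c ∈ [0,2]`,
`(ln τ²_ε)'(c) + (ln τ¹_ε)'(2-c) = 8ε((ln Φ)'(8εc) - (ln Φ)'(8εc - 16ε)) > 0`. -/
theorem sum_log_deriv_periods (ε : ℝ) (hε0 : 0 < ε) (hε : ε < 1 / 16)
    (c : ℝ) (hc : c ∈ Set.Icc (0:ℝ) 2) :
    deriv (fun b : ℝ => Real.log (tau2 ε b)) c +
      deriv (fun b : ℝ => Real.log (tau1 ε b)) (2 - c) =
      8 * ε * (deriv (fun y : ℝ => Real.log (Phi y)) (8 * ε * c) -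
        deriv (fun y : ℝ => Real.log (Phi y)) (8 * ε * c - 16 * ε)) ∧
    0 < deriv (fun b : ℝ => Real.log (tau2 ε b)) c +
      deriv (fun b : ℝ => Real.log (tau1 ε b)) (2 - c) := by
  obtain ⟨hc0, hc2⟩ := hc
  set y1 := 8 * ε * c with hy1def
  set y2 := 8 * ε * c - 16 * ε with hy2def
  have hy1lt : y1 < 1 := by nlinarith
  have hy2lty1 : y2 < y1 := by rw [hy1def, hy2def]; linarith
  have hy2lt : y2 < 1 := lt_trans hy2lty1 hy1lt
  have hC : (0:ℝ) < (2:ℝ) ^ ((5:ℝ) / 2) := Real.rpow_pos_of_pos two_pos _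
  -- tau2 part
  have inner2 : HasDerivAt (fun b : ℝ => 8 * ε * b) (8 * ε) c := by
    simpa using (hasDerivAt_id c).const_mul (8 * ε)
  have hcomp2 : HasDerivAt (fun b : ℝ => Phi (8 * ε * b)) (PP1 y1 * (8 * ε)) c :=
    (hasDerivAt_Phi hy1lt).comp c inner2
  have htau2 : HasDerivAt (fun b : ℝ => tau2 ε b)
      ((2:ℝ) ^ ((5:ℝ) / 2) * (PP1 y1 * (8 * ε))) c := hcomp2.const_mul _
  have htau2pos : 0 < tau2 ε c := by
    have := Phi_pos hy1lt
    unfold tau2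
    positivity
  have hlog2 : HasDerivAt (fun b : ℝ => Real.log (tau2 ε b))
      ((tau2 ε c)⁻¹ * ((2:ℝ) ^ ((5:ℝ) / 2) * (PP1 y1 * (8 * ε)))) c :=
    (Real.hasDerivAt_log htau2pos.ne').comp c htau2
  have d2 : deriv (fun b : ℝ => Real.log (tau2 ε b)) c = 8 * ε * (PP1 y1 / PP y1) := by
    rw [hlog2.deriv]
    have h1 : tau2 ε c = (2:ℝ) ^ ((5:ℝ) / 2) * PP y1 := by
      unfold tau2
      rw [← hy1def, Phi_eq hy1lt]
    rw [h1, mul_inv]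
    have hPne : PP y1 ≠ 0 := (PP_pos hy1lt).ne'
    field_simp
  -- tau1 part
  have inner1 : HasDerivAt (fun b : ℝ => -(8 * ε * b)) (-(8 * ε)) (2 - c) := by
    have h := ((hasDerivAt_id (2 - c)).const_mul (8 * ε)).neg
    rw [mul_one] at h
    exact h
  have hpoint : -(8 * ε * (2 - c)) = y2 := by rw [hy2def]; ring
  have hPhi2 : HasDerivAt Phi (PP1 y2) (-(8 * ε * (2 - c))) := by
    rw [hpoint]; exact hasDerivAt_Phi hy2lt
  have hcomp1 : HasDerivAt (fun b : ℝ => Phi (-(8 * ε * b))) (PP1 y2 * (-(8 * ε))) (2 - c) :=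
    hPhi2.comp (h := fun b : ℝ => -(8 * ε * b)) (2 - c) inner1
  have htau1 : HasDerivAt (fun b : ℝ => tau1 ε b)
      ((2:ℝ) ^ ((5:ℝ) / 2) * (PP1 y2 * (-(8 * ε)))) (2 - c) := hcomp1.const_mul _
  have htau1pos : 0 < tau1 ε (2 - c) := by
    have : 0 < Phi (-(8 * ε * (2 - c))) := by rw [hpoint]; exact Phi_pos hy2lt
    unfold tau1
    positivity
  have hlog1 : HasDerivAt (fun b : ℝ => Real.log (tau1 ε b))
      ((tau1 ε (2 - c))⁻¹ * ((2:ℝ) ^ ((5:ℝ) / 2) * (PP1 y2 * (-(8 * ε))))) (2 - c) :=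
    (Real.hasDerivAt_log htau1pos.ne').comp (2 - c) htau1
  have d1 : deriv (fun b : ℝ => Real.log (tau1 ε b)) (2 - c) =
      -(8 * ε) * (PP1 y2 / PP y2) := by
    rw [hlog1.deriv]
    have h1 : tau1 ε (2 - c) = (2:ℝ) ^ ((5:ℝ) / 2) * PP y2 := by
      unfold tau1
      rw [hpoint, Phi_eq hy2lt]
    rw [h1, mul_inv]
    have hPne : PP y2 ≠ 0 := (PP_pos hy2lt).ne'
    field_simp
  have hmono := M_strictMono (mem_Iio.mpr hy2lt) (mem_Iio.mpr hy1lt) hy2lty1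
  simp only [] at hmono
  constructor
  · rw [d1, d2, deriv_logPhi hy1lt, deriv_logPhi hy2lt]
    ring
  · rw [d1, d2]
    nlinarith [hmono]
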